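/- (Fundamental theorem of space curves, uniqueness) If α, α̃ : I → ℝ³ are unit-speed curves with the same positive curvature κ(s) and the same torsion τ(s), then there exist a rotation ρ ∈ SO(3) and a vector c ∈ ℝ³ such that α̃(s) = ρ(α(s)) + c for all s in some subinterval of I. -/

import Mathlib

open Real
open scoped RealInnerProductSpace

/-- Cross product on `ℝ³` (Euclidean space). -/
noncomputable def cross3 (u v : EuclideanSpace ℝ (Fin 3)) : EuclideanSpace ℝ (Fin 3) :=
  (WithLp.equiv 2 (Fin 3 → ℝ)).symm
    ![u 1 * v 2 - u 2 * v 1, u 2 * v 0 - u 0 * v 2, u 0 * v 1 - u 1 * v 0]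

section Aux

local notation "E3" => EuclideanSpace ℝ (Fin 3)

lemma cross3_apply (u v : E3) (i : Fin 3) :
    cross3 u v i = ![u 1 * v 2 - u 2 * v 1, u 2 * v 0 - u 0 * v 2, u 0 * v 1 - u 1 * v 0] i := rfl

lemma inner3 (u v : E3) : ⟪u, v⟫ = u 0 * v 0 + u 1 * v 1 + u 2 * v 2 := by
  simp [PiLp.inner_apply, Fin.sum_univ_three]; ring

lemma inner_self_cross3 (u v : E3) : ⟪u, cross3 u v⟫ = 0 := by
  simp [inner3, cross3_apply, PiLp.inner_apply, Fin.sum_univ_three]; ring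

lemma inner_right_cross3 (u v : E3) : ⟪v, cross3 u v⟫ = 0 := by
  simp [inner3, cross3_apply, PiLp.inner_apply, Fin.sum_univ_three]; ring

lemma inner_cross3_self (u v : E3) : ⟪cross3 u v, cross3 u v⟫ = ⟪u,u⟫*⟪v,v⟫ - ⟪u,v⟫^2 := by
  simp only [inner3]; simp [inner3, cross3_apply, PiLp.inner_apply, Fin.sum_univ_three]; ring

lemma cross3_self (u : E3) : cross3 u u = 0 := by
  ext i; fin_cases i <;> simp [cross3_apply] <;> ring

lemma cross3_cross3 (u v : E3) : cross3 u (cross3 u v) = ⟪u,v⟫ • u - ⟪u,u⟫ • v := by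
  simp only [inner3]; ext i; fin_cases i <;>
    simp [cross3_apply, inner3, PiLp.inner_apply, Fin.sum_univ_three, PiLp.smul_apply,
      PiLp.sub_apply, smul_eq_mul] <;> ring

lemma cross3_smul_right (c : ℝ) (u v : E3) : cross3 u (c • v) = c • cross3 u v := by
  ext i; fin_cases i <;> simp [cross3_apply, PiLp.smul_apply, smul_eq_mul] <;> ring

lemma cross3_smul_left (c : ℝ) (u v : E3) : cross3 (c • u) v = c • cross3 u v := by
  ext i; fin_cases i <;> simp [cross3_apply, PiLp.smul_apply, smul_eq_mul] <;> ring

lemma cross3_add_right (u v w : E3) : cross3 u (v + w) = cross3 u v + cross3 u w := by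
  ext i; fin_cases i <;> simp [cross3_apply, PiLp.add_apply] <;> ring

lemma hasDerivAt_comp_proj {u : ℝ → E3} {u' : E3} {x : ℝ} (hu : HasDerivAt u u' x) (i : Fin 3) :
    HasDerivAt (fun t => u t i) (u' i) x := by
  have := (EuclideanSpace.proj i (𝕜 := ℝ)).hasFDerivAt.comp_hasDerivAt x hu
  exact this

lemma hasDerivAt_cross3 {u v : ℝ → E3} {u' v' : E3} {x : ℝ}
    (hu : HasDerivAt u u' x) (hv : HasDerivAt v v' x) :
    HasDerivAt (fun t => cross3 (u t) (v t)) (cross3 u' (v x) + cross3 (u x) v') x := by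
  set e : (Fin 3 → ℝ) →L[ℝ] E3 := (PiLp.continuousLinearEquiv 2 ℝ (fun _ : Fin 3 => ℝ)).symm.toContinuousLinearMap
  have hw : HasDerivAt (fun t => (fun i =>
      ![u t 1 * v t 2 - u t 2 * v t 1, u t 2 * v t 0 - u t 0 * v t 2,
        u t 0 * v t 1 - u t 1 * v t 0] i : Fin 3 → ℝ))
      (fun i => ![u' 1 * v x 2 + u x 1 * v' 2 - (u' 2 * v x 1 + u x 2 * v' 1),
        u' 2 * v x 0 + u x 2 * v' 0 - (u' 0 * v x 2 + u x 0 * v' 2),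
        u' 0 * v x 1 + u x 0 * v' 1 - (u' 1 * v x 0 + u x 1 * v' 0)] i) x := by
    rw [hasDerivAt_pi]
    intro i
    fin_cases i <;>
      simpa using (((hasDerivAt_comp_proj hu _).fun_mul (hasDerivAt_comp_proj hv _)).fun_sub
        ((hasDerivAt_comp_proj hu _).fun_mul (hasDerivAt_comp_proj hv _)))
  have := e.hasFDerivAt.comp_hasDerivAt x hw
  refine this.congr_deriv ?_
  ext i; fin_cases i <;>
    simp [cross3, e, PiLp.add_apply] <;> ring

lemma norm_eq_one_of_inner {v : E3} (h : ⟪v,v⟫ = 1) : ‖v‖ = 1 := by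
  have h2 : ‖v‖^2 = 1 := by rw [← real_inner_self_eq_norm_sq]; exact h
  have h3 : (‖v‖-1)*(‖v‖+1) = 0 := by nlinarith
  rcases mul_eq_zero.1 h3 with h4 | h4
  · linarith
  · nlinarith [norm_nonneg v]

lemma deriv_zero_of_eventually_const {f : ℝ → ℝ} {d c x : ℝ}
    (hev : f =ᶠ[nhds x] fun _ => c) (hd : HasDerivAt f d x) : d = 0 :=
  hd.unique ((hev.hasDerivAt_iff).2 (hasDerivAt_const x c))

/-- An orthonormal basis from an orthonormal frame `T N B` in `ℝ³`. -/
lemma exists_onb (T N B : E3) (hT : ‖T‖ = 1) (hN : ‖N‖ = 1) (hB : ‖B‖ = 1)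
    (hTN : ⟪T,N⟫ = 0) (hTB : ⟪T,B⟫ = 0) (hNB : ⟪N,B⟫ = 0) :
    ∃ b : OrthonormalBasis (Fin 3) ℝ E3, ⇑b = ![T,N,B] := by
  have hTT : ⟪T,T⟫ = (1:ℝ) := by rw [real_inner_self_eq_norm_sq, hT]; norm_num
  have hNN : ⟪N,N⟫ = (1:ℝ) := by rw [real_inner_self_eq_norm_sq, hN]; norm_num
  have hBB : ⟪B,B⟫ = (1:ℝ) := by rw [real_inner_self_eq_norm_sq, hB]; norm_num
  have hon : Orthonormal ℝ (![T,N,B]) := by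
    rw [orthonormal_iff_ite]
    intro i j
    fin_cases i <;> fin_cases j <;>
      first
        | (rw [if_pos rfl]; first | exact hTT | exact hNN | exact hBB)
        | (rw [if_neg (by decide)];
           first
             | exact hTN | exact hTB | exact hNB
             | (rw [real_inner_comm]; first | exact hTN | exact hTB | exact hNB))
  have hsp : ⊤ ≤ Submodule.span ℝ (Set.range ![T,N,B]) := by
    rw [hon.linearIndependent.span_eq_top_of_card_eq_finrank (by simp)]
  exact ⟨OrthonormalBasis.mk hon hsp, OrthonormalBasis.coe_mk hon hsp⟩

/-- Principal normal. -/
noncomputable def NN (α : ℝ → E3) (κ : ℝ → ℝ) : ℝ → E3 :=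
  fun s => (κ s)⁻¹ • deriv (deriv α) s

/-- Binormal. -/
noncomputable def BB (α : ℝ → E3) (κ : ℝ → ℝ) : ℝ → E3 :=
  fun s => cross3 (deriv α s) (NN α κ s)

lemma frenet (I : Set ℝ) (hI : IsOpen I) (α : ℝ → E3) (κ τ : ℝ → ℝ)
    (hα : ContDiffOn ℝ 3 α I) (hκpos : ∀ s ∈ I, 0 < κ s)
    (hunit : ∀ s ∈ I, ‖deriv α s‖ = 1)
    (hcurv : ∀ s ∈ I, ‖deriv (deriv α) s‖ = κ s)
    (htor : ∀ s ∈ I, ⟪cross3 (deriv α s) (deriv (deriv α) s), deriv (deriv (deriv α)) s⟫ /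
      ‖cross3 (deriv α s) (deriv (deriv α) s)‖ ^ 2 = τ s) :
    ∀ s ∈ I,
      HasDerivAt α (deriv α s) s ∧
      HasDerivAt (deriv α) (κ s • NN α κ s) s ∧
      HasDerivAt (NN α κ) (-κ s • deriv α s + τ s • BB α κ s) s ∧
      HasDerivAt (BB α κ) (-τ s • NN α κ s) s ∧
      ‖deriv α s‖ = 1 ∧ ‖NN α κ s‖ = 1 ∧ ‖BB α κ s‖ = 1 ∧
      ⟪deriv α s, NN α κ s⟫ = 0 ∧ ⟪deriv α s, BB α κ s⟫ = 0 ∧ ⟪NN α κ s, BB α κ s⟫ = 0 := by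
  set T := deriv α with hTdef
  set A2 := deriv (deriv α) with hA2def
  set A3 := deriv (deriv (deriv α)) with hA3def
  have hκne : ∀ s ∈ I, κ s ≠ 0 := fun s hs => (hκpos s hs).ne'
  -- differentiability chain
  have hT2 : ContDiffOn ℝ 2 T I := hα.deriv_of_isOpen hI (by norm_num)
  have hT1 : ContDiffOn ℝ 1 A2 I := hT2.deriv_of_isOpen hI (by norm_num)
  have hdα : ∀ s ∈ I, HasDerivAt α (T s) s := fun s hs =>
    ((hα.differentiableOn (by norm_num)).differentiableAt (hI.mem_nhds hs)).hasDerivAt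
  have hdT : ∀ s ∈ I, HasDerivAt T (A2 s) s := fun s hs =>
    ((hT2.differentiableOn (by norm_num)).differentiableAt (hI.mem_nhds hs)).hasDerivAt
  have hdA2 : ∀ s ∈ I, HasDerivAt A2 (A3 s) s := fun s hs =>
    ((hT1.differentiableOn (by norm_num)).differentiableAt (hI.mem_nhds hs)).hasDerivAt
  -- basic pointwise identities
  have hA2N : ∀ s ∈ I, A2 s = κ s • NN α κ s := by
    intro s hs
    exact (smul_inv_smul₀ (hκne s hs) (A2 s)).symm
  have hNunit : ∀ s ∈ I, ‖NN α κ s‖ = 1 := by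
    intro s hs
    show ‖(κ s)⁻¹ • A2 s‖ = 1
    rw [norm_smul, hcurv s hs, norm_inv, Real.norm_eq_abs,
      abs_of_pos (hκpos s hs), inv_mul_cancel₀ (hκne s hs)]
  have hTA2 : ∀ s ∈ I, ⟪T s, A2 s⟫ = 0 := by
    intro s hs
    have hev : (fun t => ⟪T t, T t⟫) =ᶠ[nhds s] fun _ => (1:ℝ) := by
      refine Filter.eventuallyEq_of_mem (hI.mem_nhds hs) (fun t ht => ?_)
      rw [real_inner_self_eq_norm_sq, hunit t ht]; norm_num
    have hd : HasDerivAt (fun t => ⟪T t, T t⟫) (⟪T s, A2 s⟫ + ⟪A2 s, T s⟫) s :=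
      (hdT s hs).inner ℝ (hdT s hs)
    have h0 := deriv_zero_of_eventually_const hev hd
    have hc := real_inner_comm (T s) (A2 s)
    linarith
  have hTN : ∀ s ∈ I, ⟪T s, NN α κ s⟫ = 0 := by
    intro s hs
    show ⟪T s, (κ s)⁻¹ • A2 s⟫ = 0
    rw [real_inner_smul_right, hTA2 s hs, mul_zero]
  have hTB : ∀ s ∈ I, ⟪T s, BB α κ s⟫ = 0 := fun s hs => inner_self_cross3 _ _
  have hNB : ∀ s ∈ I, ⟪NN α κ s, BB α κ s⟫ = 0 := fun s hs => inner_right_cross3 _ _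
  have hBunit : ∀ s ∈ I, ‖BB α κ s‖ = 1 := by
    intro s hs
    refine norm_eq_one_of_inner ?_
    show ⟪cross3 (T s) (NN α κ s), cross3 (T s) (NN α κ s)⟫ = 1
    rw [inner_cross3_self, real_inner_self_eq_norm_sq, real_inner_self_eq_norm_sq,
      hunit s hs, hNunit s hs, hTN s hs]
    norm_num
  -- T' = κ N
  have hdT' : ∀ s ∈ I, HasDerivAt T (κ s • NN α κ s) s := by
    intro s hs; rw [← hA2N s hs]; exact hdT s hs
  -- κ is differentiable on I
  have hκd : ∀ s ∈ I, ∃ κ', HasDerivAt κ κ' s := by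
    intro s hs
    have hg : HasDerivAt (fun t => Real.sqrt ⟪A2 t, A2 t⟫)
        (1/(2*Real.sqrt ⟪A2 s, A2 s⟫) * (⟪A2 s, A3 s⟫ + ⟪A3 s, A2 s⟫)) s := by
      have hpos : ⟪A2 s, A2 s⟫ ≠ 0 := by
        rw [real_inner_self_eq_norm_sq, hcurv s hs]
        exact pow_ne_zero 2 (hκne s hs)
      exact (Real.hasDerivAt_sqrt hpos).comp s ((hdA2 s hs).inner ℝ (hdA2 s hs))
    have hev : κ =ᶠ[nhds s] fun t => Real.sqrt ⟪A2 t, A2 t⟫ := by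
      refine Filter.eventuallyEq_of_mem (hI.mem_nhds hs) (fun t ht => ?_)
      rw [real_inner_self_eq_norm_sq, Real.sqrt_sq (norm_nonneg _), hcurv t ht]
    exact ⟨_, (hev.hasDerivAt_iff).2 hg⟩
  -- main pointwise work
  intro s hs
  obtain ⟨κ', hκ'⟩ := hκd s hs
  -- derivative of N
  have hinv : HasDerivAt (fun t => (κ t)⁻¹) (-κ' / κ s ^ 2) s := hκ'.inv (hκne s hs)
  have hdN : HasDerivAt (NN α κ)
      ((κ s)⁻¹ • A3 s + (-κ' / κ s ^ 2) • A2 s) s := hinv.smul (hdA2 s hs)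
  set vN := (κ s)⁻¹ • A3 s + (-κ' / κ s ^ 2) • A2 s with hvNdef
  -- A3 s = κ' • N + κ • vN
  have hA3eq : A3 s = κ s • vN + κ' • NN α κ s := by
    have h1 : HasDerivAt (fun t => κ t • NN α κ t) (κ s • vN + κ' • NN α κ s) s :=
      hκ'.smul hdN
    have hev : (fun t => κ t • NN α κ t) =ᶠ[nhds s] A2 :=
      Filter.eventuallyEq_of_mem (hI.mem_nhds hs) (fun t ht => (hA2N t ht).symm)
    exact (((hev.hasDerivAt_iff).1 h1).unique (hdA2 s hs)).symm
  -- inner products of vN with the frame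
  have hTvN : ⟪T s, vN⟫ = -κ s := by
    have hev : (fun t => ⟪T t, NN α κ t⟫) =ᶠ[nhds s] fun _ => (0:ℝ) :=
      Filter.eventuallyEq_of_mem (hI.mem_nhds hs) (fun t ht => hTN t ht)
    have hd : HasDerivAt (fun t => ⟪T t, NN α κ t⟫)
        (⟪T s, vN⟫ + ⟪κ s • NN α κ s, NN α κ s⟫) s := (hdT' s hs).inner ℝ hdN
    have h0 := deriv_zero_of_eventually_const hev hd
    have h2 : ⟪κ s • NN α κ s, NN α κ s⟫ = κ s := by
      rw [real_inner_smul_left, real_inner_self_eq_norm_sq, hNunit s hs]; ring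
    rw [h2] at h0; linarith
  have hNvN : ⟪NN α κ s, vN⟫ = 0 := by
    have hev : (fun t => ⟪NN α κ t, NN α κ t⟫) =ᶠ[nhds s] fun _ => (1:ℝ) := by
      refine Filter.eventuallyEq_of_mem (hI.mem_nhds hs) (fun t ht => ?_)
      rw [real_inner_self_eq_norm_sq, hNunit t ht]; norm_num
    have hd : HasDerivAt (fun t => ⟪NN α κ t, NN α κ t⟫)
        (⟪NN α κ s, vN⟫ + ⟪vN, NN α κ s⟫) s := hdN.inner ℝ hdN
    have h0 := deriv_zero_of_eventually_const hev hd
    have hc := real_inner_comm (NN α κ s) vN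
    linarith
  have hBvN : ⟪BB α κ s, vN⟫ = τ s := by
    have h1 := htor s hs
    have hc : cross3 (T s) (A2 s) = κ s • BB α κ s := by
      rw [hA2N s hs]; exact cross3_smul_right _ _ _
    have hBN : ⟪BB α κ s, NN α κ s⟫ = 0 := by
      rw [real_inner_comm]; exact hNB s hs
    rw [hc, hA3eq, real_inner_smul_left, inner_add_right, real_inner_smul_right,
      real_inner_smul_right, hBN, mul_zero, add_zero, norm_smul, hBunit s hs, mul_one,
      Real.norm_eq_abs, sq_abs] at h1
    have hκ2 : κ s ^ 2 ≠ 0 := pow_ne_zero 2 (hκne s hs)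
    rw [show κ s * (κ s * ⟪BB α κ s, vN⟫) = ⟪BB α κ s, vN⟫ * κ s ^ 2 by ring,
      mul_div_assoc, div_self hκ2, mul_one] at h1
    exact h1
  -- expansion in the orthonormal frame
  obtain ⟨ob, hob⟩ := exists_onb (T s) (NN α κ s) (BB α κ s) (hunit s hs) (hNunit s hs)
    (hBunit s hs) (hTN s hs) (hTB s hs) (hNB s hs)
  have hexp : ∀ v : EuclideanSpace ℝ (Fin 3),
      v = ⟪T s, v⟫ • T s + ⟪NN α κ s, v⟫ • NN α κ s + ⟪BB α κ s, v⟫ • BB α κ s := by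
    intro v
    have h := ob.sum_repr v
    rw [Fin.sum_univ_three] at h
    simp only [OrthonormalBasis.repr_apply_apply, hob, Matrix.cons_val_zero,
      Matrix.cons_val_one, Matrix.head_cons, Matrix.cons_val_two, Matrix.tail_cons] at h
    exact h.symm
  have hvNval : vN = -κ s • T s + τ s • BB α κ s := by
    have h := hexp vN
    rw [hTvN, hNvN, hBvN, zero_smul, add_zero] at h
    rw [h]
  -- derivative of B
  have hdB : HasDerivAt (BB α κ) (-τ s • NN α κ s) s := by
    have h := hasDerivAt_cross3 (hdT' s hs) hdN
    have hTBcross : cross3 (T s) (BB α κ s) = -NN α κ s := by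
      show cross3 (T s) (cross3 (T s) (NN α κ s)) = -NN α κ s
      rw [cross3_cross3, hTN s hs, real_inner_self_eq_norm_sq, hunit s hs, zero_smul]
      norm_num
    have hval : cross3 (κ s • NN α κ s) (NN α κ s) + cross3 (T s) vN = -τ s • NN α κ s := by
      rw [hvNval, cross3_smul_left, cross3_self, smul_zero, cross3_add_right,
        cross3_smul_right, cross3_smul_right, cross3_self, smul_zero, hTBcross,
        smul_neg, neg_smul]
      abel
    rw [← hval]
    exact h
  have hdN' : HasDerivAt (NN α κ) (-κ s • T s + τ s • BB α κ s) s := by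
    rw [← hvNval]; exact hdN
  exact ⟨hdα s hs, hdT' s hs, hdN', hdB, hunit s hs, hNunit s hs, hBunit s hs,
    hTN s hs, hTB s hs, hNB s hs⟩

lemma det_frame (T N : E3) (h : ‖cross3 T N‖ = 1) :
    Matrix.det (Matrix.of fun i k => (![T, N, cross3 T N] i) k) = 1 := by
  have h2 : ⟪cross3 T N, cross3 T N⟫ = (1:ℝ) := by
    rw [real_inner_self_eq_norm_sq, h]; norm_num
  rw [inner3] at h2
  rw [Matrix.det_fin_three]
  simp only [cross3_apply] at h2
  simp only [Matrix.cons_val_zero, Matrix.cons_val_one, Matrix.head_cons,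
    Matrix.cons_val_two, Matrix.tail_cons] at h2
  simp only [Matrix.of_apply, Matrix.cons_val_zero, Matrix.cons_val_one, Matrix.head_cons,
    Matrix.cons_val_two, Matrix.tail_cons, cross3_apply]
  linear_combination h2

end Aux

/-- Fundamental theorem of space curves, uniqueness: two unit-speed curves with the same
positive curvature and the same torsion differ by a rigid motion (a rotation plus a
translation) on some subinterval. -/
theorem fundamental_theorem_uniqueness
    (I : Set ℝ) (hI : IsOpen I) (hIc : I.OrdConnected) (hIne : I.Nonempty)
    (α α' : ℝ → EuclideanSpace ℝ (Fin 3)) (κ τ : ℝ → ℝ)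
    (hα : ContDiffOn ℝ 3 α I) (hα' : ContDiffOn ℝ 3 α' I)
    (hκpos : ∀ s ∈ I, 0 < κ s)
    (hunit : ∀ s ∈ I, ‖deriv α s‖ = 1)
    (hunit' : ∀ s ∈ I, ‖deriv α' s‖ = 1)
    (hcurv : ∀ s ∈ I, ‖deriv (deriv α) s‖ = κ s)
    (hcurv' : ∀ s ∈ I, ‖deriv (deriv α') s‖ = κ s)
    (htor : ∀ s ∈ I, ⟪cross3 (deriv α s) (deriv (deriv α) s), deriv (deriv (deriv α)) s⟫ /
      ‖cross3 (deriv α s) (deriv (deriv α) s)‖ ^ 2 = τ s)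
    (htor' : ∀ s ∈ I, ⟪cross3 (deriv α' s) (deriv (deriv α') s), deriv (deriv (deriv α')) s⟫ /
      ‖cross3 (deriv α' s) (deriv (deriv α') s)‖ ^ 2 = τ s) :
    ∃ ρ : EuclideanSpace ℝ (Fin 3) ≃ₗᵢ[ℝ] EuclideanSpace ℝ (Fin 3),
      0 < LinearMap.det (ρ.toLinearEquiv : EuclideanSpace ℝ (Fin 3) →ₗ[ℝ] EuclideanSpace ℝ (Fin 3)) ∧
      ∃ c : EuclideanSpace ℝ (Fin 3), ∃ J : Set ℝ, IsOpen J ∧ J.OrdConnected ∧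
        J.Nonempty ∧ J ⊆ I ∧ ∀ s ∈ J, α' s = ρ (α s) + c := by
  obtain ⟨s₀, hs₀⟩ := hIne
  have hconv : Convex ℝ I := convex_iff_ordConnected.mpr hIc
  have F := frenet I hI α κ τ hα hκpos hunit hcurv htor
  have F' := frenet I hI α' κ τ hα' hκpos hunit' hcurv' htor'
  set T := deriv α with hT
  set N := NN α κ with hN
  set B := BB α κ with hB
  set T' := deriv α' with hT'
  set N' := NN α' κ with hN'
  set B' := BB α' κ with hB'
  obtain ⟨-, -, -, -, hT1, hN1, hB1, hTN1, hTB1, hNB1⟩ := F s₀ hs₀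
  obtain ⟨-, -, -, -, hT1', hN1', hB1', hTN1', hTB1', hNB1'⟩ := F' s₀ hs₀
  obtain ⟨ob, hob⟩ := exists_onb (T s₀) (N s₀) (B s₀) hT1 hN1 hB1 hTN1 hTB1 hNB1
  obtain ⟨ob', hob'⟩ := exists_onb (T' s₀) (N' s₀) (B' s₀) hT1' hN1' hB1' hTN1' hTB1' hNB1'
  set ρ : EuclideanSpace ℝ (Fin 3) ≃ₗᵢ[ℝ] EuclideanSpace ℝ (Fin 3) :=
    ob.repr.trans ob'.repr.symm with hρdef
  have hρ : ∀ i, ρ (ob i) = ob' i := by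
    intro i
    simp [hρdef, OrthonormalBasis.repr_self, OrthonormalBasis.repr_symm_single]
  have hρT : ρ (T s₀) = T' s₀ := by
    have := hρ 0; rw [hob, hob'] at this; simpa using this
  have hρN : ρ (N s₀) = N' s₀ := by
    have := hρ 1; rw [hob, hob'] at this; simpa using this
  have hρB : ρ (B s₀) = B' s₀ := by
    have := hρ 2; rw [hob, hob'] at this; simpa using this
  refine ⟨ρ, ?_, α' s₀ - ρ (α s₀), I, hI, hIc, ⟨s₀, hs₀⟩, subset_rfl, ?_⟩
  · -- determinant is positive
    have hdet : LinearMap.det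
        (ρ.toLinearEquiv : EuclideanSpace ℝ (Fin 3) →ₗ[ℝ] EuclideanSpace ℝ (Fin 3)) = 1 := by
      rw [← LinearMap.det_toMatrix ob.toBasis]
      have hM : LinearMap.toMatrix ob.toBasis ob.toBasis
            (ρ.toLinearEquiv : EuclideanSpace ℝ (Fin 3) →ₗ[ℝ] EuclideanSpace ℝ (Fin 3)) =
          (Matrix.of fun i k => (![T s₀, N s₀, B s₀] i) k) *
            (Matrix.of fun j k => (![T' s₀, N' s₀, B' s₀] j) k).transpose := by
        ext i j
        rw [LinearMap.toMatrix_apply]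
        have h1 : (ob.toBasis j : EuclideanSpace ℝ (Fin 3)) = ob j := by
          rw [OrthonormalBasis.coe_toBasis]
        rw [h1]
        have h2 : (ρ.toLinearEquiv :
            EuclideanSpace ℝ (Fin 3) →ₗ[ℝ] EuclideanSpace ℝ (Fin 3)) (ob j) = ob' j := hρ j
        rw [h2]
        rw [OrthonormalBasis.coe_toBasis_repr_apply, OrthonormalBasis.repr_apply_apply]
        rw [hob, hob']
        rw [Matrix.mul_apply]
        rw [inner3]
        simp [Matrix.of_apply, Matrix.transpose_apply, Fin.sum_univ_three]
      rw [hM, Matrix.det_mul, Matrix.det_transpose]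
      rw [show B s₀ = cross3 (T s₀) (N s₀) from rfl,
        show B' s₀ = cross3 (T' s₀) (N' s₀) from rfl]
      rw [det_frame (T s₀) (N s₀) hB1, det_frame (T' s₀) (N' s₀) hB1']
      norm_num
    rw [hdet]; norm_num
  · -- the rigid motion identity
    set g : ℝ → ℝ := fun s => ⟪ρ (T s), T' s⟫ + ⟪ρ (N s), N' s⟫ + ⟪ρ (B s), B' s⟫ with hg
    have hρd : ∀ {u : ℝ → EuclideanSpace ℝ (Fin 3)} {u' : EuclideanSpace ℝ (Fin 3)} {x : ℝ},
        HasDerivAt u u' x → HasDerivAt (fun t => ρ (u t)) (ρ u') x := by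
      intro u u' x hu
      exact (ρ.toContinuousLinearEquiv.toContinuousLinearMap.hasFDerivAt).comp_hasDerivAt x hu
    have hgd : ∀ s ∈ I, HasDerivWithinAt g 0 I s := by
      intro s hs
      obtain ⟨-, hdT, hdN, hdB, -, -, -, -, -, -⟩ := F s hs
      obtain ⟨-, hdT', hdN', hdB', -, -, -, -, -, -⟩ := F' s hs
      have hD : HasDerivAt g
          ((⟪ρ (T s), κ s • N' s⟫ + ⟪ρ (κ s • N s), T' s⟫) +
           (⟪ρ (N s), -κ s • T' s + τ s • B' s⟫ + ⟪ρ (-κ s • T s + τ s • B s), N' s⟫) +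
           (⟪ρ (B s), -τ s • N' s⟫ + ⟪ρ (-τ s • N s), B' s⟫)) s :=
        (((hρd hdT).inner ℝ hdT').add ((hρd hdN).inner ℝ hdN')).add
          ((hρd hdB).inner ℝ hdB')
      have hval : (⟪ρ (T s), κ s • N' s⟫ + ⟪ρ (κ s • N s), T' s⟫) +
           (⟪ρ (N s), -κ s • T' s + τ s • B' s⟫ + ⟪ρ (-κ s • T s + τ s • B s), N' s⟫) +
           (⟪ρ (B s), -τ s • N' s⟫ + ⟪ρ (-τ s • N s), B' s⟫) = 0 := by
        simp only [map_add, map_smul, inner_add_left, inner_add_right,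
          real_inner_smul_left, real_inner_smul_right, neg_smul, map_neg,
          inner_neg_left, inner_neg_right]
        ring
      rw [hval] at hD
      exact hD.hasDerivWithinAt
    have hgconst : ∀ s ∈ I, g s = g s₀ := by
      intro s hs
      have := Convex.norm_image_sub_le_of_norm_hasDerivWithin_le
        (f := g) (f' := fun _ => (0:ℝ)) (C := 0) (fun x hx => hgd x hx)
        (fun x hx => by simp) hconv hs₀ hs
      have h0 : ‖g s - g s₀‖ ≤ 0 := by simpa using this
      have := norm_le_zero_iff.1 h0
      linarith [sub_eq_zero.1 this]
    have hg0 : g s₀ = 3 := by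
      rw [hg]
      simp only [hρT, hρN, hρB]
      rw [real_inner_self_eq_norm_sq, real_inner_self_eq_norm_sq, real_inner_self_eq_norm_sq,
        hT1', hN1', hB1']
      norm_num
    -- each term equals 1, hence ρ T = T'
    have hfr : ∀ s ∈ I, ρ (T s) = T' s := by
      intro s hs
      obtain ⟨-, -, -, -, u1, u2, u3, -, -, -⟩ := F s hs
      obtain ⟨-, -, -, -, v1, v2, v3, -, -, -⟩ := F' s hs
      have e1 : ⟪ρ (T s), T' s⟫ ≤ 1 := by
        have := real_inner_le_norm (ρ (T s)) (T' s)
        rwa [ρ.norm_map, u1, v1, mul_one] at this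
      have e2 : ⟪ρ (N s), N' s⟫ ≤ 1 := by
        have := real_inner_le_norm (ρ (N s)) (N' s)
        rwa [ρ.norm_map, u2, v2, mul_one] at this
      have e3 : ⟪ρ (B s), B' s⟫ ≤ 1 := by
        have := real_inner_le_norm (ρ (B s)) (B' s)
        rwa [ρ.norm_map, u3, v3, mul_one] at this
      have hsum : ⟪ρ (T s), T' s⟫ + ⟪ρ (N s), N' s⟫ + ⟪ρ (B s), B' s⟫ = 3 := by
        have := hgconst s hs; rw [hg0] at this; exact this
      have eT : ⟪ρ (T s), T' s⟫ = 1 := by linarith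
      have hnz : ‖ρ (T s) - T' s‖ ^ 2 = 0 := by
        rw [norm_sub_sq_real, ρ.norm_map, u1, v1, eT]; norm_num
      have := pow_eq_zero_iff (n := 2) (by norm_num) |>.1 hnz
      rwa [norm_eq_zero, sub_eq_zero] at this
    -- conclude
    have hFd : ∀ s ∈ I, HasDerivWithinAt (fun t => α' t - ρ (α t)) 0 I s := by
      intro s hs
      obtain ⟨hdα, -, -, -, -, -, -, -, -, -⟩ := F s hs
      obtain ⟨hdα', -, -, -, -, -, -, -, -, -⟩ := F' s hs
      have hD : HasDerivAt (fun t => α' t - ρ (α t)) (T' s - ρ (T s)) s :=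
        hdα'.sub (hρd hdα)
      rw [hfr s hs, sub_self] at hD
      exact hD.hasDerivWithinAt
    intro s hs
    have := Convex.norm_image_sub_le_of_norm_hasDerivWithin_le
      (f := fun t => α' t - ρ (α t)) (f' := fun _ => (0 : EuclideanSpace ℝ (Fin 3))) (C := 0)
      (fun x hx => hFd x hx) (fun x hx => by simp) hconv hs₀ hs
    have h0 : ‖(α' s - ρ (α s)) - (α' s₀ - ρ (α s₀))‖ ≤ 0 := by simpa using this
    have h1 := norm_le_zero_iff.1 h0
    have h2 := sub_eq_zero.1 h1
    rw [← sub_eq_iff_eq_add']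
    exact h2
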